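/- Fix an integer r ≥ 2 and n ≥ 4. For every nonempty subset V of [1, c_{n−1}] and every maximal interval component [e_i, e_i+ℓ_i−1] of V, the subpath of D_{n+1} given by f_i(V) is a blue, green, or red subpath of D_{n+1} (i.e., it equals α(i',k') for some 0 ≤ i' < k' ≤ c_{n−1}); conversely, every blue, green, or red subpath α(i',k') of D_{n+1} equals the subpath given by f(I) for some interval I ⊆ [1, c_{n−1}]. -/

import Mathlib

open scoped Classical

namespace CF

noncomputable section

/-- The sequence `c` : `c 1 = 0`, `c 2 = 1`, `c n = r * c (n-1) - c (n-2)`.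
(The value `c 0 = -1` is the unique value consistent with the recurrence.) -/
def c (r : ℕ) : ℕ → ℤ
  | 0 => -1
  | 1 => 0
  | n + 2 => (r : ℤ) * c r (n + 1) - c r n

/-- `c` as a natural number (valid for indices `≥ 1` when `r ≥ 2`). -/
def cN (r n : ℕ) : ℕ := (c r n).toNat

/-- Height (y-coordinate) of the vertex `w_k` of the maximal Dyck path `D_n`:
the maximal Dyck path from `(0,0)` to `(c_{n-1}-c_{n-2}, c_{n-2})` weakly below the
diagonal has `w_k = (k - ⌊k·c_{n-2}/c_{n-1}⌋, ⌊k·c_{n-2}/c_{n-1}⌋)`. -/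
def hgt (r n k : ℕ) : ℕ := k * cN r (n - 2) / cN r (n - 1)

/-- The edge `α_j` of `D_n` is vertical (a north step). -/
def isVert (r n j : ℕ) : Prop := hgt r n (j - 1) < hgt r n j

/-- Index in the vertex sequence `w_0, …, w_{c_{n-1}}` of the vertex `v_j`
(the upper endpoint of the `j`-th vertical edge); `vpos r n 0 = 0`. -/
def vpos (r n j : ℕ) : ℕ := (j * cN r (n - 1) + cN r (n - 2) - 1) / cN r (n - 2)

/-- x-coordinate of the vertex `v_j` of `D_n` (its y-coordinate is `j`). -/
def vx (r n j : ℕ) : ℤ := (vpos r n j : ℤ) - (j : ℤ)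

/-- The slope `s_{i,t}` between `v_i` and `v_t` is at most the slope `s` of the diagonal,
expressed by cross-multiplication. -/
def slopeLE (r n i t : ℕ) : Prop :=
  ((t : ℤ) - (i : ℤ)) * (c r (n - 1) - c r (n - 2)) ≤ (vx r n t - vx r n i) * c r (n - 2)

/-- `{t | i < t ≤ k, s_{i,t} > s}`. -/
def badSet (r n i k : ℕ) : Finset ℕ :=
  (Finset.Icc (i + 1) k).filter fun t => ¬ slopeLE r n i t

/-- `α(i,k)` is blue: `s_{i,t} ≤ s` for all `i < t ≤ k`. -/
def isBlue (r n i k : ℕ) : Prop := badSet r n i k = ∅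

/-- `t₀` is the minimum of `{t | i < t ≤ k, s_{i,t} > s}`. -/
def minBad (r n i k t₀ : ℕ) : Prop :=
  t₀ ∈ badSet r n i k ∧ ∀ t ∈ badSet r n i k, t₀ ≤ t

/-- `α(i,k)` is `(m,w)`-green: the minimum `t₀` of `{t | i < t ≤ k, s_{i,t} > s}` exists and
equals `i + c_m - w·c_{m-1}`, with `3 ≤ m ≤ n-2` and `1 ≤ w < r-1`. -/
def isGreenMW (r n i k m w : ℕ) : Prop :=
  3 ≤ m ∧ m + 2 ≤ n ∧ 1 ≤ w ∧ (w : ℤ) < (r : ℤ) - 1 ∧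
    ∃ t₀ : ℕ, minBad r n i k t₀ ∧ (t₀ : ℤ) = (i : ℤ) + (c r m - (w : ℤ) * c r (m - 1))

def isGreen (r n i k : ℕ) : Prop := ∃ m w, isGreenMW r n i k m w

/-- `α(i,k)` is red: neither blue nor green. -/
def isRed (r n i k : ℕ) : Prop := ¬ isBlue r n i k ∧ ¬ isGreen r n i k

/-- An element of `P(D_n)`: either a single edge `α_j` (`Sum.inl j`) or a subpath
`α(i,k)` (`Sum.inr (i,k)`). -/
abbrev Elt := ℕ ⊕ ℕ × ℕ

/-- The set of (indices of) edges of `D_n` constituting an element of `P(D_n)`: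
a single edge; for `α(i,k)`, the edges from `v_i` (or from its immediate predecessor,
in the red case) to `v_k`. -/
def edges (r n : ℕ) : Elt → Finset ℕ
  | Sum.inl j => {j}
  | Sum.inr (i, k) =>
      if isRed r n i k then Finset.Icc (vpos r n i) (vpos r n k)
      else Finset.Icc (vpos r n i + 1) (vpos r n k)

/-- Validity of an element of `P(D_n)`: `1 ≤ j ≤ c_{n-1}` for a single edge,
`0 ≤ i < k ≤ c_{n-2}` for a subpath `α(i,k)`. -/
def validElt (r n : ℕ) : Elt → Prop
  | Sum.inl j => 1 ≤ j ∧ (j : ℤ) ≤ c r (n - 1)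
  | Sum.inr (i, k) => i < k ∧ (k : ℤ) ≤ c r (n - 2)

/-- The common conditions on a collection `β = {β_1,…,β_t}` of elements of `P(D_n)`:
all elements are valid, distinct elements share no edge, and for any two subpaths
`α(i,k)`, `α(i',k')` one has `i ≠ k'` and `i' ≠ k`. -/
def validColl (r n : ℕ) (β : Finset Elt) : Prop :=
  (∀ p ∈ β, validElt r n p) ∧
  (∀ p ∈ β, ∀ q ∈ β, p ≠ q → Disjoint (edges r n p) (edges r n q)) ∧
  (∀ i k i' k' : ℕ, Sum.inr (i, k) ∈ β → Sum.inr (i', k') ∈ β → i ≠ k' ∧ i' ≠ k)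

/-- The `c_{m-1} - w·c_{m-2}` edges of `D_n` immediately preceding the vertex `v_i`. -/
def precEdges (r n i m w : ℕ) : Finset ℕ :=
  Finset.Icc (vpos r n i + 1 - (c r (m - 1) - (w : ℤ) * c r (m - 2)).toNat) (vpos r n i)

/-- The set `F(D_n)`. -/
def FD (r n : ℕ) : Set (Finset Elt) :=
  {β | validColl r n β ∧
    ∀ i k m w : ℕ, Sum.inr (i, k) ∈ β → isGreenMW r n i k m w →
      ∃ e ∈ precEdges r n i m w, ∃ p ∈ β, e ∈ edges r n p}

/-- The set `F̃(D_n)`. -/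
def Ftilde (r n : ℕ) : Set (Finset Elt) := {β | validColl r n β}

/-- The set `T^{≥u}(D_n)`. -/
def Tge (r n u : ℕ) : Set (Finset Elt) :=
  {β | validColl r n β ∧ β.Nonempty ∧
    ∃ i k m w : ℕ, u ≤ m ∧ Sum.inr (i, k) ∈ β ∧ isGreenMW r n i k m w ∧
      ∀ e ∈ precEdges r n i m w, ∀ p ∈ β, e ∉ edges r n p}

/-- `|β_j|_1` for a single element. -/
def wt1 : Elt → ℕ
  | Sum.inl _ => 0
  | Sum.inr (i, k) => k - i

/-- `|β|_1`. -/
def B1 (β : Finset Elt) : ℕ := ∑ p ∈ β, wt1 p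

/-- `|β|_2`: the total number of edges in the collection `β`. -/
def B2 (r n : ℕ) (β : Finset Elt) : ℕ := (β.biUnion (edges r n)).card

/-- The field `ℚ(x₁,x₂)`. -/
abbrev K := FractionRing (MvPolynomial (Fin 2) ℚ)

/-- The indeterminate `x₁`. -/
def x₁ : K := algebraMap (MvPolynomial (Fin 2) ℚ) K (MvPolynomial.X 0)

/-- The indeterminate `x₂`. -/
def x₂ : K := algebraMap (MvPolynomial (Fin 2) ℚ) K (MvPolynomial.X 1)

/-- `b_{n-1,k}`: `r` if the edge `α_k` of `D_n` is horizontal, `r-1` if vertical. -/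
def bseq (r n k : ℕ) : ℕ := if isVert r n k then r - 1 else r

/-- Prefix sums `S e = Σ_{k=1}^{e} b_{n-1,k}`. -/
def S (r n e : ℕ) : ℕ := ∑ k ∈ Finset.Icc 1 e, bseq r n k

/-- The interval `[a,b] ⊆ [1,c_n]` is (the edge set of) a blue or green subpath of `D_{n+1}`. -/
def isBGinterval (r n a b : ℕ) : Prop :=
  ∃ i k : ℕ, i < k ∧ (k : ℤ) ≤ c r (n - 1) ∧ ¬ isRed r (n + 1) i k ∧
    Finset.Icc a b = Finset.Icc (vpos r (n + 1) i + 1) (vpos r (n + 1) k)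

/-- Left endpoints of the maximal interval components of `V`. -/
def starts (V : Finset ℕ) : Finset ℕ := V.filter fun e => e - 1 ∉ V

/-- Right endpoint of the maximal interval component of `V` starting at `e`. -/
def compEnd (V : Finset ℕ) (e : ℕ) : ℕ := sSup {g : ℕ | Finset.Icc e g ⊆ V}

/-- `f_i(V)`: the image of the maximal interval component of `V` starting at `e`. -/
def fcomp (r n : ℕ) (V : Finset ℕ) (e : ℕ) : Finset ℕ :=
  if isBGinterval r n (S r n (e - 1) + 1) (S r n (compEnd V e)) then
    Finset.Icc (S r n (e - 1) + 1) (S r n (compEnd V e))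
  else
    insert (S r n (e - 1)) (Finset.Icc (S r n (e - 1) + 1) (S r n (compEnd V e)))

/-- The map `f` from subsets of `[1,c_{n-1}]` to subsets of `[1,c_n]`. -/
def fmap (r n : ℕ) (V : Finset ℕ) : Finset ℕ := (starts V).biUnion (fcomp r n V)

/-- The pull-back `f*` (of the map `f` one level down, from subsets of `[1,c_{n-2}]`
to subsets of `[1,c_{n-1}]`). -/
def fstar (r n : ℕ) (W : Finset ℕ) : Finset ℕ :=
  ((Finset.Icc 1 (cN r (n - 2))).powerset.filter fun U => fmap r (n - 1) U ⊆ W).biUnion id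

/-- `δ` of a maximal interval component `[e,g]`: `1` if the `w`-th edge of the corresponding
subpath of `D_n` is vertical for some `2 ≤ w ≤ r-1`, and `0` otherwise. -/
def deltaComp (r n e g : ℕ) : ℕ :=
  if ∃ w : ℕ, 2 ≤ w ∧ w ≤ r - 1 ∧ e + w - 1 ≤ g ∧ isVert r n (e + w - 1) then 1 else 0

/-- `δ_V`. -/
def deltaV (r n : ℕ) (V : Finset ℕ) : ℕ :=
  ∑ e ∈ starts V, deltaComp r n e (compEnd V e)

/-- Generalized binomial coefficient for integers `A`, `B`. -/
def gbinom (A B : ℤ) : ℚ :=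
  if B < 0 then 0
  else (∏ i ∈ Finset.range B.toNat, ((A : ℚ) - (i : ℚ))) / (B.toNat.factorial : ℚ)

/-- `z_n` for `n ≥ 4`, given by the sum over `F̃(D_n)`. -/
def zF (r n : ℕ) : K :=
  x₁ ^ (-(c r (n - 1))) * x₂ ^ (-(c r (n - 2))) *
    ∑ᶠ β ∈ Ftilde r n,
      x₁ ^ ((r : ℤ) * (B1 β : ℤ)) * x₂ ^ ((r : ℤ) * (c r (n - 1) - (B2 r n β : ℤ)))

/-- `z_n`, with `z_3 = x_3` (the value `x3` is the cluster variable `x_3`). -/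
def z (r : ℕ) (x3 : K) (n : ℕ) : K := if n = 3 then x3 else zF r n

end


section AuxLemmas

variable {r n : ℕ}

lemma c_step (hr : 2 ≤ r) : ∀ m : ℕ, 0 ≤ c r (m + 1) ∧ c r (m + 1) < c r (m + 2) := by
  intro m
  induction m with
  | zero => norm_num [c]
  | succ k ih =>
    obtain ⟨h1, h2⟩ := ih
    refine ⟨by linarith, ?_⟩
    show c r (k + 2) < (r : ℤ) * c r (k + 2) - c r (k + 1)
    have hr' : (2 : ℤ) ≤ r := by exact_mod_cast hr
    nlinarith

lemma c_nonneg (hr : 2 ≤ r) {m : ℕ} (hm : 1 ≤ m) : 0 ≤ c r m := by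
  obtain ⟨k, rfl⟩ : ∃ k, m = k + 1 := ⟨m - 1, by omega⟩
  exact (c_step hr k).1

lemma c_lt_succ (hr : 2 ≤ r) {m : ℕ} (hm : 1 ≤ m) : c r m < c r (m + 1) := by
  obtain ⟨k, rfl⟩ : ∃ k, m = k + 1 := ⟨m - 1, by omega⟩
  exact (c_step hr k).2

lemma c_one_le (hr : 2 ≤ r) {m : ℕ} (hm : 2 ≤ m) : 1 ≤ c r m := by
  induction m with
  | zero => omega
  | succ k ih =>
    rcases Nat.lt_or_ge k 2 with h | h
    · interval_cases k
      · omega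
      · norm_num [c]
    · have h1 := c_lt_succ hr (show 1 ≤ k by omega)
      have h2 := ih (by omega)
      omega

lemma cN_cast (hr : 2 ≤ r) {m : ℕ} (hm : 1 ≤ m) : (cN r m : ℤ) = c r m :=
  Int.toNat_of_nonneg (c_nonneg hr hm)

lemma cN_pos (hr : 2 ≤ r) {m : ℕ} (hm : 2 ≤ m) : 0 < cN r m := by
  have h1 := c_one_le hr hm
  have h2 := cN_cast hr (show 1 ≤ m by omega)
  omega

lemma cN_lt (hr : 2 ≤ r) {m : ℕ} (hm : 1 ≤ m) : cN r m < cN r (m + 1) := by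
  have h := c_lt_succ hr hm
  have h1 := cN_cast hr hm
  have h2 := cN_cast hr (show 1 ≤ m + 1 by omega)
  omega

lemma key_rec (hr : 2 ≤ r) (hn : 4 ≤ n) : cN r n + cN r (n - 2) = r * cN r (n - 1) := by
  obtain ⟨m, rfl⟩ : ∃ m, n = m + 2 := ⟨n - 2, by omega⟩
  have hz : c r (m + 2) + c r m = (r : ℤ) * c r (m + 1) := by
    show (r : ℤ) * c r (m + 1) - c r m + c r m = (r : ℤ) * c r (m + 1)
    ring
  have h1 := cN_cast hr (show 1 ≤ m + 2 by omega)
  have h2 := cN_cast hr (show 1 ≤ m + 1 by omega)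
  have h3 := cN_cast hr (show 1 ≤ m by omega)
  have e1 : m + 2 - 2 = m := by omega
  have e2 : m + 2 - 1 = m + 1 := by omega
  rw [e1, e2]
  have : (cN r (m + 2) : ℤ) + (cN r m : ℤ) = (r : ℤ) * (cN r (m + 1) : ℤ) := by
    rw [h1, h2, h3]; exact hz
  exact_mod_cast this

lemma hgt_succ (hr : 2 ≤ r) (hn : 4 ≤ n) (k : ℕ) :
    hgt r n k ≤ hgt r n (k + 1) ∧ hgt r n (k + 1) ≤ hgt r n k + 1 := by
  have hB : 0 < cN r (n - 1) := cN_pos hr (by omega)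
  have haB : cN r (n - 2) ≤ cN r (n - 1) := by
    have h := cN_lt hr (show 1 ≤ n - 2 by omega)
    have e : n - 2 + 1 = n - 1 := by omega
    rw [e] at h
    omega
  constructor
  · exact Nat.div_le_div_right (Nat.mul_le_mul_right _ (Nat.le_succ k))
  · show (k + 1) * cN r (n - 2) / cN r (n - 1) ≤ k * cN r (n - 2) / cN r (n - 1) + 1
    have h1 : (k + 1) * cN r (n - 2) ≤ k * cN r (n - 2) + cN r (n - 1) := by
      have : (k + 1) * cN r (n - 2) = k * cN r (n - 2) + cN r (n - 2) := by ring
      omega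
    calc (k + 1) * cN r (n - 2) / cN r (n - 1)
        ≤ (k * cN r (n - 2) + cN r (n - 1)) / cN r (n - 1) := Nat.div_le_div_right h1
      _ = k * cN r (n - 2) / cN r (n - 1) + 1 := Nat.add_div_right _ hB

lemma S_hgt (hr : 2 ≤ r) (hn : 4 ≤ n) : ∀ e : ℕ, S r n e + hgt r n e = r * e := by
  intro e
  induction e with
  | zero => simp [S, hgt]
  | succ e ih =>
    have hstep : S r n (e + 1) = S r n e + bseq r n (e + 1) := by
      rw [S, S, Finset.sum_Icc_succ_top (by omega : 1 ≤ e + 1)]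
    have hs := hgt_succ hr hn e
    have hv : isVert r n (e + 1) ↔ hgt r n e < hgt r n (e + 1) := by
      simp [isVert]
    have hre : r * (e + 1) = r * e + r := by ring
    rw [hstep]
    by_cases h : hgt r n e < hgt r n (e + 1)
    · simp only [bseq]
      rw [if_pos (hv.mpr h)]
      omega
    · simp only [bseq]
      rw [if_neg (fun hvv => h (hv.mp hvv))]
      omega

lemma S_strictMono (hr : 2 ≤ r) (hn : 4 ≤ n) : StrictMono (S r n) := by
  apply strictMono_nat_of_lt_succ
  intro e
  have h1 := S_hgt hr hn e
  have h2 := S_hgt hr hn (e + 1)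
  have hs := hgt_succ hr hn e
  have hre : r * (e + 1) = r * e + r := by ring
  omega

lemma ceil_div (X p m B : ℕ) (hB : 0 < B) (hm : m < B) (h : X + m = B * p) :
    (X + B - 1) / B = p := by
  have h2 : X + B - 1 = (B - 1 - m) + B * p := by omega
  rw [h2, Nat.add_mul_div_left _ _ hB, Nat.div_eq_of_lt (by omega), Nat.zero_add]

lemma vpos_eq_S (hr : 2 ≤ r) (hn : 4 ≤ n) (e : ℕ) : vpos r (n + 1) e = S r n e := by
  have hB : 0 < cN r (n - 1) := cN_pos hr (by omega)
  have hrec := key_rec hr hn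
  have hdm : cN r (n - 1) * (e * cN r (n - 2) / cN r (n - 1))
      + e * cN r (n - 2) % cN r (n - 1) = e * cN r (n - 2) := Nat.div_add_mod _ _
  have hm : e * cN r (n - 2) % cN r (n - 1) < cN r (n - 1) := Nat.mod_lt _ hB
  have h1 : e * cN r n + e * cN r (n - 2) = r * e * cN r (n - 1) := by
    calc e * cN r n + e * cN r (n - 2) = e * (cN r n + cN r (n - 2)) := by ring
      _ = e * (r * cN r (n - 1)) := by rw [hrec]
      _ = r * e * cN r (n - 1) := by ring
  have hX : e * cN r n + e * cN r (n - 2) % cN r (n - 1)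
      = cN r (n - 1) * (r * e - e * cN r (n - 2) / cN r (n - 1)) := by
    have hsub : (r * e - e * cN r (n - 2) / cN r (n - 1)) * cN r (n - 1)
        = r * e * cN r (n - 1) - (e * cN r (n - 2) / cN r (n - 1)) * cN r (n - 1) :=
      Nat.sub_mul _ _ _
    have c1 : cN r (n - 1) * (r * e - e * cN r (n - 2) / cN r (n - 1))
        = (r * e - e * cN r (n - 2) / cN r (n - 1)) * cN r (n - 1) := mul_comm _ _
    have c2 : (e * cN r (n - 2) / cN r (n - 1)) * cN r (n - 1)
        = cN r (n - 1) * (e * cN r (n - 2) / cN r (n - 1)) := mul_comm _ _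
    omega
  have hc := ceil_div (e * cN r n) (r * e - e * cN r (n - 2) / cN r (n - 1))
    (e * cN r (n - 2) % cN r (n - 1)) (cN r (n - 1)) hB hm hX
  have hS : S r n e + e * cN r (n - 2) / cN r (n - 1) = r * e := S_hgt hr hn e
  have e1 : n + 1 - 1 = n := by omega
  have e2 : n + 1 - 2 = n - 1 := by omega
  show (e * cN r (n + 1 - 1) + cN r (n + 1 - 2) - 1) / cN r (n + 1 - 2) = S r n e
  rw [e1, e2, hc]
  omega

lemma main_key (hr : 2 ≤ r) (hn : 4 ≤ n) (i' k' : ℕ) (hik : i' < k')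
    (hk : (k' : ℤ) ≤ c r (n - 1)) :
    (if isBGinterval r n (S r n i' + 1) (S r n k') then
        Finset.Icc (S r n i' + 1) (S r n k')
      else insert (S r n i') (Finset.Icc (S r n i' + 1) (S r n k')))
      = edges r (n + 1) (Sum.inr (i', k')) := by
  have hmono := S_strictMono hr hn
  have hSlt : S r n i' < S r n k' := hmono hik
  have hiff : isBGinterval r n (S r n i' + 1) (S r n k') ↔ ¬ isRed r (n + 1) i' k' := by
    constructor
    · intro hbg
      obtain ⟨i, k, hik2, hk2, hnred, heq⟩ := hbg
      rw [vpos_eq_S hr hn, vpos_eq_S hr hn] at heq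
      have hlt2 : S r n i < S r n k := hmono hik2
      have m1 : S r n i' + 1 ∈ Finset.Icc (S r n i + 1) (S r n k) := by
        rw [← heq]; exact Finset.mem_Icc.mpr ⟨le_refl _, by omega⟩
      have m2 : S r n i + 1 ∈ Finset.Icc (S r n i' + 1) (S r n k') := by
        rw [heq]; exact Finset.mem_Icc.mpr ⟨le_refl _, by omega⟩
      have m3 : S r n k' ∈ Finset.Icc (S r n i + 1) (S r n k) := by
        rw [← heq]; exact Finset.mem_Icc.mpr ⟨by omega, le_refl _⟩
      have m4 : S r n k ∈ Finset.Icc (S r n i' + 1) (S r n k') := by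
        rw [heq]; exact Finset.mem_Icc.mpr ⟨by omega, le_refl _⟩
      rw [Finset.mem_Icc] at m1 m2 m3 m4
      have hi : i = i' := hmono.injective (by omega)
      have hkk : k = k' := hmono.injective (by omega)
      rw [← hi, ← hkk]
      exact hnred
    · intro h
      exact ⟨i', k', hik, hk, h, by rw [vpos_eq_S hr hn, vpos_eq_S hr hn]⟩
  simp only [edges, vpos_eq_S hr hn]
  by_cases h : isRed r (n + 1) i' k'
  · rw [if_neg (fun hbg => (hiff.mp hbg) h), if_pos h, Finset.Icc_add_one_left_eq_Ioc,
      Finset.Ioc_insert_left hSlt.le]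
  · rw [if_pos (hiff.mpr h), if_neg h]

end AuxLemmas

theorem fmap_components_are_subpaths (r : ℕ) (hr : 2 ≤ r) (n : ℕ) (hn : 4 ≤ n) :
    (∀ V : Finset ℕ, V ⊆ Finset.Icc 1 (cN r (n - 1)) → V.Nonempty →
      ∀ e ∈ starts V, ∃ i' k' : ℕ, i' < k' ∧ (k' : ℤ) ≤ c r (n - 1) ∧
        fcomp r n V e = edges r (n + 1) (Sum.inr (i', k'))) ∧
    (∀ i' k' : ℕ, i' < k' → (k' : ℤ) ≤ c r (n - 1) →
      ∃ a b : ℕ, 1 ≤ a ∧ a ≤ b ∧ (b : ℤ) ≤ c r (n - 1) ∧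
        fmap r n (Finset.Icc a b) = edges r (n + 1) (Sum.inr (i', k'))) := by
  constructor
  · intro V hVsub hVne e he
    rw [starts, Finset.mem_filter] at he
    obtain ⟨heV, -⟩ := he
    have he1 := Finset.mem_Icc.mp (hVsub heV)
    have hTbdd : BddAbove {g : ℕ | Finset.Icc e g ⊆ V} := by
      refine ⟨cN r (n - 1), fun g hg => ?_⟩
      by_cases hge : e ≤ g
      · have hgV : g ∈ V := hg (Finset.mem_Icc.mpr ⟨hge, le_refl g⟩)
        exact (Finset.mem_Icc.mp (hVsub hgV)).2
      · omega
    have heT : e ∈ {g : ℕ | Finset.Icc e g ⊆ V} := by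
      simp only [Set.mem_setOf_eq, Finset.Icc_self]
      simpa using heV
    have hge : e ≤ compEnd V e := le_csSup hTbdd heT
    have hgT : compEnd V e ∈ {g : ℕ | Finset.Icc e g ⊆ V} := Nat.sSup_mem ⟨e, heT⟩ hTbdd
    have hgV : compEnd V e ∈ V := hgT (Finset.mem_Icc.mpr ⟨hge, le_refl _⟩)
    have hgle : compEnd V e ≤ cN r (n - 1) := (Finset.mem_Icc.mp (hVsub hgV)).2
    have hkZ : ((compEnd V e : ℤ)) ≤ c r (n - 1) := by
      have hcast := cN_cast hr (show 1 ≤ n - 1 by omega)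
      have : ((compEnd V e : ℤ)) ≤ (cN r (n - 1) : ℤ) := by exact_mod_cast hgle
      omega
    refine ⟨e - 1, compEnd V e, by omega, hkZ, ?_⟩
    simp only [fcomp]
    exact main_key hr hn (e - 1) (compEnd V e) (by omega) hkZ
  · intro i' k' hik hk
    refine ⟨i' + 1, k', by omega, by omega, hk, ?_⟩
    have hstarts : starts (Finset.Icc (i' + 1) k') = {i' + 1} := by
      ext x
      simp only [starts, Finset.mem_filter, Finset.mem_Icc, Finset.mem_singleton]
      omega
    have hend : compEnd (Finset.Icc (i' + 1) k') (i' + 1) = k' := by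
      have hset : {g : ℕ | Finset.Icc (i' + 1) g ⊆ Finset.Icc (i' + 1) k'} = Set.Iic k' := by
        ext g
        simp only [Set.mem_setOf_eq, Set.mem_Iic]
        constructor
        · intro h
          by_cases hg : i' + 1 ≤ g
          · exact (Finset.mem_Icc.mp (h (Finset.mem_Icc.mpr ⟨hg, le_refl g⟩))).2
          · omega
        · intro h
          exact Finset.Icc_subset_Icc_right h
      show sSup _ = k'
      rw [hset, csSup_Iic]
    rw [fmap, hstarts, Finset.singleton_biUnion]
    simp only [fcomp, hend, Nat.add_sub_cancel]
    exact main_key hr hn i' k' hik hk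

end CF
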